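/- Let X and G be random A × N real matrices on a probability space whose entries are square-integrable, let γ ∈ ℝ with 0 < γ ≤ 1, and let b ∈ ℝ^N be a fixed vector. Then there exists Δt₀ > 0 such that for all Δt with 0 ≤ Δt ≤ Δt₀, bᵀ (E[Xᵀ (X − γ Δt G)]) b ≥ 0, where the expectation of a random matrix is taken entrywise. -/

import Mathlib

open MeasureTheory Matrix

private lemma l2_mul_integrable {Ω : Type*} [MeasurableSpace Ω] {P : Measure Ω}
    {f g : Ω → ℝ} (hf : MemLp f 2 P) (hg : MemLp g 2 P) :
    Integrable (fun ω => f ω * g ω) P := by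
  have hb : Integrable (fun ω => (f ω ^ 2 + g ω ^ 2) / 2) P :=
    (hf.integrable_sq.add hg.integrable_sq).div_const 2
  refine hb.mono' (hf.aestronglyMeasurable.mul hg.aestronglyMeasurable) ?_
  filter_upwards with ω
  rw [Real.norm_eq_abs, abs_mul]
  nlinarith [sq_nonneg (|f ω| - |g ω|), sq_abs (f ω), sq_abs (g ω), abs_nonneg (f ω),
    abs_nonneg (g ω)]

/-- Appendix B combined case analysis: with the next-state feature Jacobian scaling as
`Δt • G`, the quadratic form of `Ã = E[Xᵀ(X - γ Δt G)]` at a fixed test vector `b` is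
nonnegative for all sufficiently small timesteps `Δt ≥ 0`. -/
theorem quadratic_form_nonneg_for_small_timestep
    {Ω : Type*} [MeasurableSpace Ω] (P : Measure Ω) [IsProbabilityMeasure P]
    {A N : ℕ}
    (X G : Ω → Matrix (Fin A) (Fin N) ℝ)
    (hX : ∀ i j, MemLp (fun ω => X ω i j) 2 P)
    (hG : ∀ i j, MemLp (fun ω => G ω i j) 2 P)
    (γ : ℝ) (hγ : 0 < γ) (hγ1 : γ ≤ 1)
    (b : Fin N → ℝ) :
    ∃ Δt₀ > (0 : ℝ), ∀ Δt : ℝ, 0 ≤ Δt → Δt ≤ Δt₀ →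
      0 ≤ b ⬝ᵥ (Matrix.of fun i j =>
            ∫ ω, ((X ω)ᵀ * (X ω - (γ * Δt) • G ω)) i j ∂P).mulVec b := by
  classical
  set u : Ω → Fin A → ℝ := fun ω => (X ω).mulVec b with hu
  set w : Ω → Fin A → ℝ := fun ω => (G ω).mulVec b with hw
  have hul2 : ∀ k, MemLp (fun ω => u ω k) 2 P := by
    intro k
    have : MemLp (fun ω => ∑ j, b j * X ω k j) 2 P :=
      memLp_finset_sum _ (fun j _ => (hX k j).const_mul (b j))
    simpa [hu, Matrix.mulVec, dotProduct, mul_comm] using this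
  have hwl2 : ∀ k, MemLp (fun ω => w ω k) 2 P := by
    intro k
    have : MemLp (fun ω => ∑ j, b j * G ω k j) 2 P :=
      memLp_finset_sum _ (fun j _ => (hG k j).const_mul (b j))
    simpa [hw, Matrix.mulVec, dotProduct, mul_comm] using this
  set f : Ω → ℝ := fun ω => ∑ k, u ω k * u ω k with hf
  set g : Ω → ℝ := fun ω => ∑ k, u ω k * w ω k with hg
  have hfi : Integrable f P :=
    integrable_finset_sum _ (fun k _ => l2_mul_integrable (hul2 k) (hul2 k))
  have hgi : Integrable g P :=
    integrable_finset_sum _ (fun k _ => l2_mul_integrable (hul2 k) (hwl2 k))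
  have key : ∀ Δt : ℝ,
      b ⬝ᵥ (Matrix.of fun i j =>
            ∫ ω, ((X ω)ᵀ * (X ω - (γ * Δt) • G ω)) i j ∂P).mulVec b
        = (∫ ω, f ω ∂P) - (γ * Δt) * ∫ ω, g ω ∂P := by
    intro Δt
    set c : ℝ := γ * Δt with hc
    set M : Ω → Matrix (Fin N) (Fin N) ℝ := fun ω => (X ω)ᵀ * (X ω - c • G ω) with hM
    have hMint : ∀ i j, Integrable (fun ω => M ω i j) P := by
      intro i j
      have h1 : ∀ k : Fin A, Integrable
          (fun ω => X ω k i * (X ω k j - c * G ω k j)) P := fun k =>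
        l2_mul_integrable (hX k i) ((hX k j).sub ((hG k j).const_mul c))
      have h2 := integrable_finset_sum Finset.univ (fun k _ => h1 k)
      simpa [hM, Matrix.mul_apply, Matrix.transpose_apply, Matrix.sub_apply,
        Matrix.smul_apply, smul_eq_mul] using h2
    have e1 : ∀ i j, b i * ((∫ ω, M ω i j ∂P) * b j)
        = ∫ ω, b i * (M ω i j * b j) ∂P := by
      intro i j
      rw [← integral_mul_const, ← integral_const_mul]
    have e2 : ∀ i, ∑ j, ∫ ω, b i * (M ω i j * b j) ∂P
        = ∫ ω, ∑ j, b i * (M ω i j * b j) ∂P := fun i =>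
      (integral_finset_sum _ (fun j _ => ((hMint i j).mul_const (b j)).const_mul (b i))).symm
    have step1 : b ⬝ᵥ (Matrix.of fun i j => ∫ ω, M ω i j ∂P).mulVec b
        = ∫ ω, b ⬝ᵥ (M ω).mulVec b ∂P := by
      simp only [dotProduct, Matrix.mulVec, Matrix.of_apply, Finset.mul_sum]
      simp only [e1, e2]
      rw [← integral_finset_sum _ (fun i _ => integrable_finset_sum (μ := P) Finset.univ
        (fun j _ => ((hMint i j).mul_const (b j)).const_mul (b i)))]
    have hpt : ∀ ω, b ⬝ᵥ (M ω).mulVec b = f ω - c * g ω := by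
      intro ω
      rw [hM]
      rw [← Matrix.mulVec_mulVec, Matrix.dotProduct_mulVec, Matrix.vecMul_transpose,
        Matrix.sub_mulVec, Matrix.smul_mulVec, dotProduct_sub,
        dotProduct_smul]
      simp [hf, hg, hu, hw, dotProduct, smul_eq_mul, Finset.mul_sum]
    calc b ⬝ᵥ (Matrix.of fun i j => ∫ ω, M ω i j ∂P).mulVec b
        = ∫ ω, b ⬝ᵥ (M ω).mulVec b ∂P := step1
      _ = ∫ ω, (f ω - c * g ω) ∂P := by
          congr 1; ext ω; exact hpt ω
      _ = (∫ ω, f ω ∂P) - c * ∫ ω, g ω ∂P := by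
          rw [integral_sub hfi (hgi.const_mul c), integral_const_mul]
  set S : ℝ := ∫ ω, f ω ∂P with hS
  set T : ℝ := ∫ ω, g ω ∂P with hT
  have hSnn : 0 ≤ S := by
    apply integral_nonneg
    intro ω
    exact Finset.sum_nonneg fun k _ => mul_self_nonneg _
  by_cases hS0 : S = 0
  · -- then u = 0 a.e., so T = 0
    have hf0 : f =ᵐ[P] 0 := by
      rw [← integral_eq_zero_iff_of_nonneg (fun ω => Finset.sum_nonneg
        fun k _ => mul_self_nonneg _) hfi]
      exact hS0
    have hg0 : g =ᵐ[P] 0 := by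
      filter_upwards [hf0] with ω hω
      have hsum : ∑ k, u ω k * u ω k = 0 := hω
      have huk : ∀ k, u ω k = 0 := by
        intro k
        have := (Finset.sum_eq_zero_iff_of_nonneg
          (fun k _ => mul_self_nonneg (u ω k))).mp hsum k (Finset.mem_univ k)
        exact mul_self_eq_zero.mp this
      simp [hg, huk]
    have hT0 : T = 0 := by
      rw [hT, integral_congr_ae hg0]
      simp
    refine ⟨1, one_pos, fun Δt h0 h1 => ?_⟩
    rw [key Δt, hS0, hT0]
    simp
  · have hSpos : 0 < S := lt_of_le_of_ne hSnn (Ne.symm hS0)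
    have hden : 0 < γ * (|T| + 1) := by positivity
    refine ⟨S / (γ * (|T| + 1)), div_pos hSpos hden, fun Δt h0 h1 => ?_⟩
    rw [key Δt]
    have h2 : Δt * (γ * (|T| + 1)) ≤ S := (le_div_iff₀ hden).mp h1
    nlinarith [le_abs_self T, abs_nonneg T, mul_nonneg hγ.le h0]
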